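/- Let H be a complex Hilbert space and T a bounded operator on H that is power bounded. Let M and N be closed subspaces of H, each invariant under T, such that the closed linear span of M ∪ N equals H, the restriction T|_M is similar to an isometry, and T|_N is stable, i.e. ‖T^n y‖ → 0 as n → ∞ for every y ∈ N. Then the map X : M ⊕₂ N → H defined by X(x, y) = x + y is a continuous linear equivalence (bounded with bounded inverse), and X ∘ (T|_M ⊕ T|_N) = T ∘ X; in particular, T is similar to the direct sum T|_M ⊕ T|_N. -/

import Mathlib

set_option maxHeartbeats 1000000


noncomputable section

/-- An operator `S` on a normed space `M` is similar to an isometry if there are a complex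
Hilbert space `W`, an isometric bounded operator `J` on `W`, and a continuous linear
equivalence `Y : M ≃L[ℂ] W` with `Y ∘ S = J ∘ Y`. -/
def SimilarToIsometry {M : Type*} [NormedAddCommGroup M] [NormedSpace ℂ M] (S : M →L[ℂ] M) : Prop :=
  ∃ (W : Type) (_ : NormedAddCommGroup W) (_ : InnerProductSpace ℂ W) (_ : CompleteSpace W)
    (J : W →L[ℂ] W) (Y : M ≃L[ℂ] W),
    (∀ w : W, ‖J w‖ = ‖w‖) ∧ ∀ x : M, Y (S x) = J (Y x)

/-- Lemma 1.1: if `T` is power bounded, `M` and `N` are closed invariant subspaces spanning `H`,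
`T|_M` is similar to an isometry and `T|_N` is stable, then the natural map
`X : M ⊕₂ N → H`, `X(x, y) = x + y`, is a continuous linear equivalence intertwining
`T|_M ⊕ T|_N` with `T`; in particular `T ≈ T|_M ⊕ T|_N`. -/
theorem similar_to_direct_sum_of_invariant_subspaces
    {H : Type} [NormedAddCommGroup H] [InnerProductSpace ℂ H] [CompleteSpace H]
    (T : H →L[ℂ] H) (hpow : ∃ C : ℝ, ∀ n : ℕ, ‖T ^ n‖ ≤ C)
    (M N : Submodule ℂ H) (hMc : IsClosed (M : Set H)) (hNc : IsClosed (N : Set H))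
    (hMinv : ∀ x ∈ M, T x ∈ M) (hNinv : ∀ y ∈ N, T y ∈ N)
    (hspan : (M ⊔ N).topologicalClosure = ⊤)
    (hiso : SimilarToIsometry
      (ContinuousLinearMap.codRestrict (T.comp M.subtypeL) M (fun x => hMinv x x.2)))
    (hstable : ∀ y ∈ N, Filter.Tendsto (fun n : ℕ => ‖(T ^ n) y‖) Filter.atTop (nhds 0)) :
    ∃ X : WithLp 2 (M × N) ≃L[ℂ] H,
      (∀ (x : M) (y : N),
        X ((WithLp.equiv 2 (M × N)).symm (x, y)) = (x : H) + (y : H)) ∧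
      (∀ (x : M) (y : N),
        T (X ((WithLp.equiv 2 (M × N)).symm (x, y)))
          = X ((WithLp.equiv 2 (M × N)).symm
              (⟨T x, hMinv x x.2⟩, ⟨T y, hNinv y y.2⟩))) := by
  classical
  obtain ⟨C, hC⟩ := hpow
  have hC0 : 0 ≤ C := le_trans (norm_nonneg _) (hC 1)
  set S : M →L[ℂ] M :=
    ContinuousLinearMap.codRestrict (T.comp M.subtypeL) M (fun x => hMinv x x.2) with hS
  have hScoe : ∀ x : M, ((S x : M) : H) = T (x : H) := fun x => rfl
  have hSpow : ∀ (n : ℕ) (x : M), (((S ^ n) x : M) : H) = (T ^ n) (x : H) := by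
    intro n
    induction n with
    | zero => intro x; simp
    | succ n ih =>
        intro x
        rw [pow_succ, pow_succ, ContinuousLinearMap.mul_apply, ContinuousLinearMap.mul_apply,
          ih, hScoe]
  obtain ⟨W, _, _, _, J, Y, hJ, hY⟩ := hiso
  have hJpow : ∀ (n : ℕ) (w : W), ‖(J ^ n) w‖ = ‖w‖ := by
    intro n
    induction n with
    | zero => intro w; simp
    | succ n ih =>
        intro w
        rw [pow_succ, ContinuousLinearMap.mul_apply]
        rw [show (J ^ n) (J w) = (J ^ n) (J w) from rfl, ih, hJ]
  have hYpow : ∀ (n : ℕ) (x : M), Y ((S ^ n) x) = (J ^ n) (Y x) := by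
    intro n
    induction n with
    | zero => intro x; simp
    | succ n ih =>
        intro x
        rw [pow_succ', pow_succ', ContinuousLinearMap.mul_apply, ContinuousLinearMap.mul_apply,
          hY, ih]
  set c : ℝ := ‖(Y.symm : W →L[ℂ] M)‖ * ‖(Y : M →L[ℂ] W)‖ with hc
  have hc0 : 0 ≤ c := mul_nonneg (norm_nonneg _) (norm_nonneg _)
  -- lower bound: ‖x‖ ≤ c * ‖T^n x‖ for x ∈ M
  have hlow : ∀ (n : ℕ) (x : M), ‖(x : H)‖ ≤ c * ‖(T ^ n) (x : H)‖ := by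
    intro n x
    have h1 : ‖x‖ ≤ ‖(Y.symm : W →L[ℂ] M)‖ * ‖Y x‖ := by
      calc ‖x‖ = ‖Y.symm (Y x)‖ := by rw [Y.symm_apply_apply]
        _ ≤ ‖(Y.symm : W →L[ℂ] M)‖ * ‖Y x‖ := (Y.symm : W →L[ℂ] M).le_opNorm _
    have h2 : ‖Y x‖ = ‖Y ((S ^ n) x)‖ := by rw [hYpow n x, hJpow]
    have h3 : ‖Y ((S ^ n) x)‖ ≤ ‖(Y : M →L[ℂ] W)‖ * ‖(S ^ n) x‖ :=
      (Y : M →L[ℂ] W).le_opNorm _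
    have h4 : ‖(S ^ n) x‖ = ‖(T ^ n) (x : H)‖ := by
      rw [← hSpow n x]; rfl
    calc ‖(x : H)‖ = ‖x‖ := rfl
      _ ≤ ‖(Y.symm : W →L[ℂ] M)‖ * ‖Y x‖ := h1
      _ = ‖(Y.symm : W →L[ℂ] M)‖ * ‖Y ((S ^ n) x)‖ := by rw [h2]
      _ ≤ ‖(Y.symm : W →L[ℂ] M)‖ * (‖(Y : M →L[ℂ] W)‖ * ‖(S ^ n) x‖) :=
          mul_le_mul_of_nonneg_left h3 (norm_nonneg _)
      _ = c * ‖(T ^ n) (x : H)‖ := by rw [hc, h4]; ring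
  -- key estimate
  have hkey : ∀ (x : M) (y : N), ‖(x : H)‖ ≤ c * C * ‖(x : H) + (y : H)‖ := by
    intro x y
    have htend := hstable y y.2
    have hn : ∀ n : ℕ, ‖(x : H)‖ ≤ c * (C * ‖(x : H) + (y : H)‖ + ‖(T ^ n) (y : H)‖) := by
      intro n
      refine (hlow n x).trans (mul_le_mul_of_nonneg_left ?_ hc0)
      have : ‖(T ^ n) (x : H)‖ ≤ ‖(T ^ n) ((x : H) + (y : H))‖ + ‖(T ^ n) (y : H)‖ := by
        have : (T ^ n) (x : H) = (T ^ n) ((x : H) + (y : H)) - (T ^ n) (y : H) := by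
          rw [map_add]; abel
        rw [this]
        exact norm_sub_le _ _
      refine this.trans (add_le_add_left ?_ _)
      exact ((T ^ n).le_opNorm _).trans (mul_le_mul_of_nonneg_right (hC n) (norm_nonneg _))
    have hlim : Filter.Tendsto (fun n : ℕ => c * (C * ‖(x : H) + (y : H)‖ + ‖(T ^ n) (y : H)‖))
        Filter.atTop (nhds (c * C * ‖(x : H) + (y : H)‖)) := by
      have := ((htend.const_add (C * ‖(x : H) + (y : H)‖)).const_mul c)
      simpa [mul_assoc] using this
    exact ge_of_tendsto' hlim hn
  -- the map L
  set L : WithLp 2 (M × N) →L[ℂ] H :=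
    (M.subtypeL.coprod N.subtypeL).comp
      (WithLp.prodContinuousLinearEquiv 2 ℂ M N : WithLp 2 (M × N) →L[ℂ] M × N) with hL
  have hLapply : ∀ v : WithLp 2 (M × N), L v = (v.fst : H) + (v.snd : H) := by
    intro v; rfl
  set K : ℝ := 1 + 2 * (c * C) with hK
  have hK0 : 0 ≤ K := by positivity
  have hbound : ∀ v : WithLp 2 (M × N), ‖v‖ ≤ K * ‖L v‖ := by
    intro v
    have hsq : ‖v‖ ^ 2 = ‖v.fst‖ ^ 2 + ‖v.snd‖ ^ 2 := WithLp.prod_norm_sq_eq_of_L2 v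
    have h1 : ‖v.fst‖ ≤ c * C * ‖L v‖ := by
      rw [hLapply]
      exact hkey v.fst v.snd
    have h2 : ‖v.snd‖ ≤ (1 + c * C) * ‖L v‖ := by
      have : ‖(v.snd : H)‖ ≤ ‖(v.fst : H) + (v.snd : H)‖ + ‖(v.fst : H)‖ := by
        simpa [add_sub_cancel_left] using norm_sub_le ((v.fst : H) + (v.snd : H)) (v.fst : H)
      rw [hLapply]
      calc ‖v.snd‖ = ‖(v.snd : H)‖ := rfl
        _ ≤ ‖(v.fst : H) + (v.snd : H)‖ + ‖(v.fst : H)‖ := this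
        _ ≤ ‖(v.fst : H) + (v.snd : H)‖ + c * C * ‖(v.fst : H) + (v.snd : H)‖ :=
            add_le_add_right (hkey v.fst v.snd) _
        _ = (1 + c * C) * ‖(v.fst : H) + (v.snd : H)‖ := by ring
    have hv0 : 0 ≤ ‖v‖ := norm_nonneg _
    have hLv0 : 0 ≤ ‖L v‖ := norm_nonneg _
    have hf0 : 0 ≤ ‖v.fst‖ := norm_nonneg _
    have hs0 : 0 ≤ ‖v.snd‖ := norm_nonneg _
    have hsq2 : ‖v‖ ^ 2 ≤ (K * ‖L v‖) ^ 2 := by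
      rw [hK]
      nlinarith [mul_self_le_mul_self hf0 h1, mul_self_le_mul_self hs0 h2,
        mul_nonneg (mul_nonneg hc0 hC0) (mul_nonneg hLv0 hLv0),
        mul_nonneg (mul_nonneg (mul_nonneg hc0 hC0) (mul_nonneg hc0 hC0))
          (mul_nonneg hLv0 hLv0), hsq]
    exact le_of_pow_le_pow_left₀ two_ne_zero (by positivity) hsq2
  haveI : CompleteSpace M := hMc.completeSpace_coe
  haveI : CompleteSpace N := hNc.completeSpace_coe
  have hanti : AntilipschitzWith K.toNNReal L := by
    apply L.antilipschitz_of_bound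
    intro v
    rw [Real.coe_toNNReal K hK0]
    exact hbound v
  have hker : L.ker = ⊥ := by
    refine (Submodule.eq_bot_iff _).mpr fun v hv => ?_
    have h0 : L v = 0 := LinearMap.mem_ker.mp hv
    have hb := hbound v
    rw [h0, norm_zero, mul_zero] at hb
    exact norm_le_zero_iff.mp hb
  have hclosed : IsClosed (Set.range L) := hanti.isClosed_range L.uniformContinuous
  have hrange : L.range = ⊤ := by
    have hsub : M ⊔ N ≤ L.range := by
      rw [sup_le_iff]
      constructor
      · intro x hx
        exact ⟨(WithLp.equiv 2 (M × N)).symm (⟨x, hx⟩, 0), by simp [hLapply]⟩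
      · intro y hy
        exact ⟨(WithLp.equiv 2 (M × N)).symm (0, ⟨y, hy⟩), by simp [hLapply]⟩
    have hcl : (M ⊔ N).topologicalClosure ≤ L.range := by
      refine Submodule.topologicalClosure_minimal _ hsub ?_
      have : ((L.range : Submodule ℂ H) : Set H) = Set.range L := by
        ext z; simp [LinearMap.mem_range, Set.mem_range]
      rw [this]
      exact hclosed
    rw [hspan] at hcl
    exact top_le_iff.mp hcl
  refine ⟨ContinuousLinearEquiv.ofBijective L hker hrange, ?_, ?_⟩
  · intro x y
    show L _ = _
    rw [hLapply]
    rfl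
  · intro x y
    have e1 : ∀ (a : M) (b : N),
        (ContinuousLinearEquiv.ofBijective L hker hrange)
          ((WithLp.equiv 2 (M × N)).symm (a, b)) = (a : H) + (b : H) := by
      intro a b
      show L _ = _
      rw [hLapply]
      rfl
    rw [e1, e1]
    simp [map_add]
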